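/- A norm ⦀·⦀ on ℝ^d is orthant-strictly monotonic if and only if for every vector u ∈ ℝ^d with u ≠ 0 there exists a vector v ∈ ℝ^d with v ≠ 0 such that supp(v) = supp(u), u_i v_i ≥ 0 for all i, and ⟨u, v⟩ = ⦀u⦀ · ⦀v⦀⋆ (i.e., v is ⦀·⦀-dual to u). -/

import Mathlib

open Finset Set

namespace OSMPaper

variable {d : ℕ}

/-- Standard inner product on `ℝ^d = Fin d → ℝ`. -/
def dot (x y : Fin d → ℝ) : ℝ := ∑ i, x i * y i

/-- `N` is a norm on `ℝ^d`. -/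
def IsNorm (N : (Fin d → ℝ) → ℝ) : Prop :=
  (∀ x, 0 ≤ N x) ∧ (∀ x, N x = 0 ↔ x = 0) ∧
  (∀ (c : ℝ) (x : Fin d → ℝ), N (c • x) = |c| * N x) ∧
  (∀ x y, N (x + y) ≤ N x + N y)

/-- `proj K x = x_K`, the vector coinciding with `x` on `K` and zero outside `K`. -/
def proj (K : Finset (Fin d)) (x : Fin d → ℝ) : Fin d → ℝ :=
  fun i => if i ∈ K then x i else 0

/-- The coordinate subspace `ℝ_K`. -/
def coordSubspace (K : Finset (Fin d)) : Set (Fin d → ℝ) :=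
  {x | ∀ j, j ∉ K → x j = 0}

/-- Orthant-monotonic norm. -/
def OrthantMonotonic (N : (Fin d → ℝ) → ℝ) : Prop :=
  ∀ x x' : Fin d → ℝ, (∀ i, |x i| ≤ |x' i|) → (∀ i, 0 ≤ x i * x' i) → N x ≤ N x'

/-- Orthant-strictly monotonic norm. -/
def OrthantStrictlyMonotonic (N : (Fin d → ℝ) → ℝ) : Prop :=
  ∀ x x' : Fin d → ℝ, (∀ i, |x i| ≤ |x' i|) → (∃ j, |x j| < |x' j|) →
    (∀ i, 0 ≤ x i * x' i) → N x < N x'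

/-- Dual norm `⦀y⦀⋆ = sup_{N x ≤ 1} ⟨x, y⟩`. -/
noncomputable def dualNorm (N : (Fin d → ℝ) → ℝ) (y : Fin d → ℝ) : ℝ :=
  sSup {r | ∃ x, N x ≤ 1 ∧ r = dot x y}

/-- Support function of a set `S`. -/
noncomputable def suppFn (S : Set (Fin d → ℝ)) (y : Fin d → ℝ) : ℝ :=
  sSup {r | ∃ x ∈ S, r = dot x y}

/-- Generalized top-`k` norm associated with the source norm `N`. -/
noncomputable def topNorm (N : (Fin d → ℝ) → ℝ) (k : ℕ) (x : Fin d → ℝ) : ℝ :=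
  sSup {r | ∃ K : Finset (Fin d), K.card ≤ k ∧ r = N (proj K x)}

/-- Generalized `k`-support norm: the dual norm of the generalized top-`k` norm. -/
noncomputable def supportNorm (N : (Fin d → ℝ) → ℝ) (k : ℕ) : (Fin d → ℝ) → ℝ :=
  dualNorm (topNorm N k)

/-- The ℓ0 pseudonorm: the number of nonzero components. -/
noncomputable def l0 (x : Fin d → ℝ) : ℕ := Set.ncard {i | x i ≠ 0}

/-- `x` is an extreme point of the convex set `C`. -/
def ExtremePt (C : Set (Fin d → ℝ)) (x : Fin d → ℝ) : Prop :=
  x ∈ C ∧ ∀ y ∈ C, ∀ z ∈ C, ∀ t : ℝ, 0 < t → t < 1 →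
    x = t • y + (1 - t) • z → y = x ∧ z = x

/-! ### Auxiliary lemmas -/


lemma dot_smul_left (c : ℝ) (x y : Fin d → ℝ) : dot (c • x) y = c * dot x y := by
  simp [dot, Finset.mul_sum, mul_assoc]

lemma dot_add_left (x y z : Fin d → ℝ) : dot (x + y) z = dot x z + dot y z := by
  simp [dot, add_mul, Finset.sum_add_distrib]

lemma pi_repr (x : Fin d → ℝ) : x = ∑ i, (x i) • (Pi.single i (1:ℝ) : Fin d → ℝ) := by
  ext j
  rw [Finset.sum_apply]
  simp [Pi.single_apply]

section basics
variable {N : (Fin d → ℝ) → ℝ} (hN : IsNorm N)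
include hN

lemma N_zero : N 0 = 0 := (hN.2.1 0).mpr rfl

lemma N_pos {x : Fin d → ℝ} (hx : x ≠ 0) : 0 < N x :=
  lt_of_le_of_ne (hN.1 x) fun h => hx ((hN.2.1 x).mp h.symm)

lemma N_sum_le {s : Finset (Fin d)} (f : Fin d → (Fin d → ℝ)) :
    N (∑ i ∈ s, f i) ≤ ∑ i ∈ s, N (f i) := by
  classical
  induction s using Finset.cons_induction with
  | empty => simp [N_zero hN]
  | cons a s ha ih =>
    rw [Finset.sum_cons, Finset.sum_cons]
    exact le_trans (hN.2.2.2 _ _) (by linarith)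

lemma N_le_const_mul_norm (x : Fin d → ℝ) :
    N x ≤ (∑ i, N (Pi.single i 1)) * ‖x‖ := by
  classical
  calc N x = N (∑ i, (x i) • (Pi.single i (1:ℝ) : Fin d → ℝ)) := by rw [← pi_repr]
    _ ≤ ∑ i, N ((x i) • (Pi.single i (1:ℝ) : Fin d → ℝ)) := N_sum_le hN _
    _ = ∑ i, |x i| * N (Pi.single i 1) := by simp [hN.2.2.1]
    _ ≤ ∑ i, ‖x‖ * N (Pi.single i 1) := by
        apply Finset.sum_le_sum
        intro i _
        exact mul_le_mul_of_nonneg_right (by simpa using norm_le_pi_norm x i) (hN.1 _)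
    _ = (∑ i, N (Pi.single i 1)) * ‖x‖ := by
        rw [Finset.sum_mul]; exact Finset.sum_congr rfl fun i _ => mul_comm _ _

lemma N_continuous : Continuous N := by
  set K := ∑ i, N (Pi.single i (1:ℝ)) with hK
  have hdiff : ∀ x y : Fin d → ℝ, N x - N y ≤ K * ‖x - y‖ := by
    intro x y
    have h1 : N x ≤ N y + N (x - y) := by
      have := hN.2.2.2 y (x - y); simpa using this
    have h2 := N_le_const_mul_norm hN (x - y)
    linarith
  have : LipschitzWith (Real.toNNReal K) N := by
    apply LipschitzWith.of_dist_le_mul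
    intro x y
    have hK0 : 0 ≤ K := Finset.sum_nonneg fun i _ => hN.1 _
    rw [Real.dist_eq, dist_eq_norm, Real.coe_toNNReal K hK0]
    rw [abs_le]
    constructor
    · have := hdiff y x
      have : N y - N x ≤ K * ‖x - y‖ := by
        rwa [show ‖y - x‖ = ‖x - y‖ from norm_sub_rev y x] at this
      linarith
    · exact hdiff x y
  exact this.continuous

lemma exists_lower (hd : 0 < d) : ∃ c : ℝ, 0 < c ∧ ∀ x, c * ‖x‖ ≤ N x := by
  haveI : Nonempty (Fin d) := ⟨⟨0, hd⟩⟩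
  have hsph : IsCompact (Metric.sphere (0 : Fin d → ℝ) 1) := isCompact_sphere 0 1
  have hne : (Metric.sphere (0 : Fin d → ℝ) 1).Nonempty :=
    NormedSpace.sphere_nonempty.mpr zero_le_one
  obtain ⟨z0, hz0mem, hz0min⟩ := hsph.exists_isMinOn hne (N_continuous hN).continuousOn
  have hz0 : z0 ≠ 0 := by
    intro h
    rw [h] at hz0mem
    simp at hz0mem
  refine ⟨N z0, N_pos hN hz0, ?_⟩
  intro x
  rcases eq_or_ne x 0 with rfl | hx
  · simp [N_zero hN]
  · have hxn : (0:ℝ) < ‖x‖ := norm_pos_iff.mpr hx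
    have hmem : ‖x‖⁻¹ • x ∈ Metric.sphere (0 : Fin d → ℝ) 1 := by
      simp [norm_smul, abs_of_pos (inv_pos.mpr hxn), inv_mul_cancel₀ hxn.ne']
    have h2 : N (‖x‖⁻¹ • x) = ‖x‖⁻¹ * N x := by
      rw [hN.2.2.1]; rw [abs_of_pos (inv_pos.mpr hxn)]
    have h3 : N z0 ≤ ‖x‖⁻¹ * N x := by
      have := hz0min hmem
      simpa [h2] using this
    calc N z0 * ‖x‖ ≤ (‖x‖⁻¹ * N x) * ‖x‖ :=
          mul_le_mul_of_nonneg_right h3 hxn.le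
      _ = N x := by field_simp

end basics

section dual
variable {N : (Fin d → ℝ) → ℝ}

lemma zero_mem_dualSet (hN : IsNorm N) (y : Fin d → ℝ) :
    (0:ℝ) ∈ {r | ∃ x, N x ≤ 1 ∧ r = dot x y} :=
  ⟨0, by simp [N_zero hN], by simp [dot]⟩

lemma bddAbove_dualSet (hd : 0 < d) (hN : IsNorm N) (y : Fin d → ℝ) :
    BddAbove {r | ∃ x, N x ≤ 1 ∧ r = dot x y} := by
  obtain ⟨c, hc, hlow⟩ := exists_lower hN hd
  refine ⟨c⁻¹ * ∑ i, |y i|, ?_⟩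
  rintro r ⟨x, hx1, rfl⟩
  have hxi : ∀ i, |x i| ≤ c⁻¹ := by
    intro i
    have h1 : |x i| ≤ ‖x‖ := by simpa using norm_le_pi_norm x i
    have h2 : c * ‖x‖ ≤ 1 := (hlow x).trans hx1
    have h3 : ‖x‖ ≤ c⁻¹ := by
      rw [inv_eq_one_div, le_div_iff₀ hc]
      nlinarith
    linarith
  calc dot x y ≤ ∑ i, |x i| * |y i| := by
        apply Finset.sum_le_sum
        intro i _
        calc x i * y i ≤ |x i * y i| := le_abs_self _
          _ = |x i| * |y i| := abs_mul _ _
    _ ≤ ∑ i, c⁻¹ * |y i| := by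
        apply Finset.sum_le_sum
        intro i _
        exact mul_le_mul_of_nonneg_right (hxi i) (abs_nonneg _)
    _ = c⁻¹ * ∑ i, |y i| := by rw [Finset.mul_sum]

lemma dualNorm_nonneg (hd : 0 < d) (hN : IsNorm N) (y : Fin d → ℝ) :
    0 ≤ dualNorm N y :=
  le_csSup (bddAbove_dualSet hd hN y) (zero_mem_dualSet hN y)

lemma dot_le_mul (hd : 0 < d) (hN : IsNorm N) (x y : Fin d → ℝ) :
    dot x y ≤ N x * dualNorm N y := by
  rcases eq_or_ne x 0 with rfl | hx
  · simp [dot, N_zero hN]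
  · have hNx : 0 < N x := N_pos hN hx
    have hmem : (N x)⁻¹ * dot x y ∈ {r | ∃ z, N z ≤ 1 ∧ r = dot z y} := by
      refine ⟨(N x)⁻¹ • x, ?_, ?_⟩
      · rw [hN.2.2.1, abs_of_pos (inv_pos.mpr hNx), inv_mul_cancel₀ hNx.ne']
      · rw [dot_smul_left]
    have := le_csSup (bddAbove_dualSet hd hN y) hmem
    calc dot x y = N x * ((N x)⁻¹ * dot x y) := by field_simp
      _ ≤ N x * dualNorm N y := mul_le_mul_of_nonneg_left this hNx.le

lemma dot_self_pos {y : Fin d → ℝ} (hy : y ≠ 0) : 0 < dot y y := by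
  obtain ⟨j, hj⟩ := Function.ne_iff.mp hy
  apply Finset.sum_pos' (fun i _ => mul_self_nonneg _)
  exact ⟨j, Finset.mem_univ j, mul_self_pos.mpr hj⟩

lemma dualNorm_pos (hd : 0 < d) (hN : IsNorm N) {y : Fin d → ℝ} (hy : y ≠ 0) :
    0 < dualNorm N y := by
  have hNy : 0 < N y := N_pos hN hy
  have hmem : (N y)⁻¹ * dot y y ∈ {r | ∃ z, N z ≤ 1 ∧ r = dot z y} := by
    refine ⟨(N y)⁻¹ • y, ?_, ?_⟩
    · rw [hN.2.2.1, abs_of_pos (inv_pos.mpr hNy), inv_mul_cancel₀ hNy.ne']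
    · rw [dot_smul_left]
  have h1 := le_csSup (bddAbove_dualSet hd hN y) hmem
  have h2 : 0 < (N y)⁻¹ * dot y y := mul_pos (inv_pos.mpr hNy) (dot_self_pos hy)
  unfold dualNorm
  exact lt_of_lt_of_le h2 h1

lemma exists_dual_functional (hN : IsNorm N)
    {u : Fin d → ℝ} (hu : u ≠ 0) :
    ∃ v : Fin d → ℝ, dot u v = N u ∧ ∀ x, dot x v ≤ N x := by
  classical
  set f : (Fin d → ℝ) →ₗ.[ℝ] ℝ := LinearPMap.mkSpanSingleton u (N u) hu with hf
  have hfle : ∀ z : f.domain, f z ≤ N z := by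
    rintro ⟨z, hz⟩
    have hz' : z ∈ Submodule.span ℝ {u} := hz
    obtain ⟨c, rfl⟩ := Submodule.mem_span_singleton.mp hz'
    have happ : f ⟨c • u, hz⟩ = c • N u := LinearPMap.mkSpanSingleton'_apply _ _ _ c _
    rw [happ]
    have : N (c • u) = |c| * N u := hN.2.2.1 c u
    rw [this, smul_eq_mul]
    exact mul_le_mul_of_nonneg_right (le_abs_self c) (hN.1 u)
  obtain ⟨g, hg1, hg2⟩ := exists_extension_of_le_sublinear f N
    (fun c hc x => by rw [hN.2.2.1, abs_of_pos hc]) hN.2.2.2 hfle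
  have hgu : g u = N u := by
    have := hg1 ⟨u, Submodule.mem_span_singleton_self u⟩
    rw [this]
    exact LinearPMap.mkSpanSingleton_apply ℝ ℝ hu (N u)
  refine ⟨fun i => g (Pi.single i 1), ?_, ?_⟩
  · have hdx : dot u (fun i => g (Pi.single i 1)) = g u := by
      conv_rhs => rw [pi_repr u]
      rw [map_sum]
      simp [dot, map_smul]
    rw [hdx, hgu]
  · intro x
    have hdx : dot x (fun i => g (Pi.single i 1)) = g x := by
      conv_rhs => rw [pi_repr x]
      rw [map_sum]
      simp [dot, map_smul]
    rw [hdx]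
    exact hg2 x

end dual

/-! ### Pointwise sign lemmas -/

lemma abs_add_of_sign {a b : ℝ} (hab : 0 ≤ a * b) : |a + b| = |a| + |b| := by
  rcases mul_nonneg_iff.mp hab with ⟨ha, hb⟩ | ⟨ha, hb⟩
  · rw [abs_of_nonneg ha, abs_of_nonneg hb, abs_of_nonneg (by linarith)]
  · rw [abs_of_nonpos ha, abs_of_nonpos hb, abs_of_nonpos (by linarith)]
    ring

lemma add_ne_zero_of_sign {a b : ℝ} (hab : 0 ≤ a * b) (h : |a| < |b|) : a + b ≠ 0 := by
  rcases mul_nonneg_iff.mp hab with ⟨ha, hb⟩ | ⟨ha, hb⟩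
  · rw [abs_of_nonneg ha, abs_of_nonneg hb] at h
    intro hc
    linarith
  · rw [abs_of_nonpos ha, abs_of_nonpos hb] at h
    intro hc
    linarith

lemma term_le {a b v : ℝ} (hab : 0 ≤ a * b) (habs : |a| ≤ |b|)
    (hav : 0 ≤ a * v) (hsupp : a = 0 → v = 0) : a * v ≤ b * v := by
  rcases eq_or_ne a 0 with rfl | ha
  · rw [hsupp rfl]; simp
  rcases mul_nonneg_iff.mp hab with ⟨h1, h2⟩ | ⟨h1, h2⟩
  · have ha' : 0 < a := lt_of_le_of_ne h1 (Ne.symm ha)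
    have hv : 0 ≤ v := by nlinarith
    rw [abs_of_nonneg h1, abs_of_nonneg h2] at habs
    exact mul_le_mul_of_nonneg_right habs hv
  · have ha' : a < 0 := lt_of_le_of_ne h1 ha
    have hv : v ≤ 0 := by nlinarith
    rw [abs_of_nonpos h1, abs_of_nonpos h2] at habs
    nlinarith

lemma term_le2 {a b v : ℝ} (hab : 0 ≤ a * b) (habs : |a| ≤ |b|)
    (hmv : 0 ≤ (a + b) * v) (hsupp : a + b = 0 → v = 0) : a * v ≤ b * v := by
  rcases mul_nonneg_iff.mp hab with ⟨h1, h2⟩ | ⟨h1, h2⟩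
  · rw [abs_of_nonneg h1, abs_of_nonneg h2] at habs
    rcases eq_or_lt_of_le (by linarith : (0:ℝ) ≤ a + b) with he | hpos
    · rw [hsupp he.symm]; simp
    · have hv : 0 ≤ v := by nlinarith
      exact mul_le_mul_of_nonneg_right habs hv
  · rw [abs_of_nonpos h1, abs_of_nonpos h2] at habs
    rcases eq_or_lt_of_le (by linarith : a + b ≤ 0) with he | hneg
    · rw [hsupp he]; simp
    · have hv : v ≤ 0 := by nlinarith
      nlinarith

lemma term_lt {a b v : ℝ} (hab : 0 ≤ a * b) (habs : |a| < |b|)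
    (hmv : 0 ≤ (a + b) * v) (hvne : v ≠ 0) : a * v < b * v := by
  rcases mul_nonneg_iff.mp hab with ⟨h1, h2⟩ | ⟨h1, h2⟩
  · rw [abs_of_nonneg h1, abs_of_nonneg h2] at habs
    have hpos : 0 < a + b := by linarith
    have hv : 0 ≤ v := by nlinarith
    have hv' : 0 < v := lt_of_le_of_ne hv (Ne.symm hvne)
    nlinarith
  · rw [abs_of_nonpos h1, abs_of_nonpos h2] at habs
    have hneg : a + b < 0 := by linarith
    have hv : v ≤ 0 := by nlinarith
    have hv' : v < 0 := lt_of_le_of_ne hv hvne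
    nlinarith

lemma dot_update_zero (u v : Fin d → ℝ) (j : Fin d) :
    dot (Function.update u j 0) v = dot u v - u j * v j := by
  classical
  unfold dot
  rw [← Finset.sum_erase_add _ _ (Finset.mem_univ j),
      ← Finset.sum_erase_add _ (fun i => u i * v i) (Finset.mem_univ j)]
  have h1 : ∑ i ∈ Finset.univ.erase j, (Function.update u j 0 i) * v i
      = ∑ i ∈ Finset.univ.erase j, u i * v i :=
    Finset.sum_congr rfl fun i hi => by
      rw [Function.update_of_ne (Finset.ne_of_mem_erase hi)]
  rw [h1, Function.update_self]
  ring

lemma OM_of_OSM {N : (Fin d → ℝ) → ℝ}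
    (h : OrthantStrictlyMonotonic N) : OrthantMonotonic N := by
  intro x x' habs hsgn
  by_cases hstrict : ∃ j, |x j| < |x' j|
  · exact (h x x' habs hstrict hsgn).le
  · push_neg at hstrict
    have hxx : x = x' := by
      funext i
      have h1 : |x i| = |x' i| := le_antisymm (habs i) (hstrict i)
      rcases abs_eq_abs.mp h1 with h2 | h2
      · exact h2
      · have h3 : x' i = 0 := by nlinarith [hsgn i]
        rw [h2, h3]; ring
    rw [hxx]


/-- a norm is orthant-strictly monotonic iff every nonzero vector
`u` admits a nonzero `⦀·⦀`-dual vector `v` with the same support and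
`u i * v i ≥ 0` for all `i`. -/
theorem orthantStrictlyMonotonic_iff_dual_vector
    (hd : 0 < d) (N : (Fin d → ℝ) → ℝ) (hN : IsNorm N) :
    OrthantStrictlyMonotonic N ↔
      ∀ u : Fin d → ℝ, u ≠ 0 → ∃ v : Fin d → ℝ, v ≠ 0 ∧
        {i | v i ≠ 0} = {i | u i ≠ 0} ∧ (∀ i, 0 ≤ u i * v i) ∧
        dot u v = N u * dualNorm N v := by
  classical
  constructor
  · -- forward
    intro hOSM u hu
    have hOM : OrthantMonotonic N := OM_of_OSM hOSM
    obtain ⟨w, hw1, hw2⟩ := exists_dual_functional hN hu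
    set v : Fin d → ℝ := fun i => if u i ≠ 0 then w i else 0 with hv
    have hNu : 0 < N u := N_pos hN hu
    have hduv : dot u v = N u := by
      rw [← hw1]
      unfold dot
      apply Finset.sum_congr rfl
      intro i _
      by_cases h : u i = 0 <;> simp [hv, h]
    have hvle : ∀ x, dot x v ≤ N x := by
      intro x
      set x' : Fin d → ℝ := fun i => if u i ≠ 0 then x i else 0 with hx'
      have h1 : dot x v = dot x' w := by
        unfold dot
        apply Finset.sum_congr rfl
        intro i _
        by_cases h : u i = 0 <;> simp [hv, hx', h]
      have h2 : N x' ≤ N x := by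
        apply hOM
        · intro i
          by_cases h : u i = 0 <;> simp [hx', h, abs_nonneg]
        · intro i
          by_cases h : u i = 0 <;> simp [hx', h, mul_self_nonneg]
      rw [h1]
      exact (hw2 x').trans h2
    have hdv : dualNorm N v = 1 := by
      apply le_antisymm
      · apply csSup_le ⟨0, zero_mem_dualSet hN v⟩
        rintro r ⟨x, hx1, rfl⟩
        exact (hvle x).trans hx1
      · have hmem : (1:ℝ) ∈ {r | ∃ x, N x ≤ 1 ∧ r = dot x v} := by
          refine ⟨(N u)⁻¹ • u, ?_, ?_⟩
          · rw [hN.2.2.1, abs_of_pos (inv_pos.mpr hNu), inv_mul_cancel₀ hNu.ne']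
          · rw [dot_smul_left, hduv, inv_mul_cancel₀ hNu.ne']
        exact le_csSup (bddAbove_dualSet hd hN v) hmem
    have hsign : ∀ i, 0 ≤ u i * v i := by
      intro i
      by_contra hneg
      push_neg at hneg
      have h2 : N (Function.update u i 0) ≤ N u := by
        apply hOM
        · intro k
          by_cases h : k = i
          · subst h; simp [Function.update_self, abs_nonneg]
          · rw [Function.update_of_ne h]
        · intro k
          by_cases h : k = i
          · subst h; simp [Function.update_self]
          · rw [Function.update_of_ne h]; exact mul_self_nonneg _
      have h3 := hvle (Function.update u i 0)
      rw [dot_update_zero, hduv] at h3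
      linarith
    have hsupp : {i | v i ≠ 0} = {i | u i ≠ 0} := by
      ext i
      simp only [Set.mem_setOf_eq]
      constructor
      · intro h
        by_contra h2
        apply h
        simp [hv, h2]
      · intro h
        by_contra hvi
        have hlt : N (Function.update u i 0) < N u := by
          apply hOSM
          · intro k
            by_cases hk : k = i
            · subst hk; simp [Function.update_self, abs_nonneg]
            · rw [Function.update_of_ne hk]
          · refine ⟨i, ?_⟩
            simp [Function.update_self, abs_pos.mpr h]
          · intro k
            by_cases hk : k = i
            · subst hk; simp [Function.update_self]
            · rw [Function.update_of_ne hk]; exact mul_self_nonneg _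
        have h3 := hvle (Function.update u i 0)
        rw [dot_update_zero, hduv, hvi] at h3
        simp at h3
        linarith
    have hvne : v ≠ 0 := by
      intro h
      rw [h] at hduv
      simp [dot] at hduv
      exact hNu.ne' hduv.symm
    exact ⟨v, hvne, hsupp, hsign, by rw [hduv, hdv, mul_one]⟩
  · -- reverse
    intro H x x' habs hstrict hsgn
    obtain ⟨j, hj⟩ := hstrict
    have hx'ne : x' ≠ 0 := by
      intro h
      rw [h] at hj
      simp at hj
      exact absurd hj (abs_nonneg (x j)).not_gt
    have hOM : ∀ a b : Fin d → ℝ, (∀ i, |a i| ≤ |b i|) → (∀ i, 0 ≤ a i * b i) →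
        N a ≤ N b := by
      intro a b ha hs
      rcases eq_or_ne a 0 with rfl | hane
      · rw [N_zero hN]; exact hN.1 b
      obtain ⟨v, hvne, hvsupp, hvsign, hvdual⟩ := H a hane
      have hD : 0 < dualNorm N v := dualNorm_pos hd hN hvne
      have hsuppv : ∀ i, a i = 0 → v i = 0 := by
        intro i hai
        by_contra hvi
        exact ((Set.ext_iff.mp hvsupp i).mp hvi) hai
      have h1 : dot a v ≤ dot b v := by
        apply Finset.sum_le_sum
        intro i _
        exact term_le (hs i) (ha i) (hvsign i) (hsuppv i)
      have h2 : dot b v ≤ N b * dualNorm N v := dot_le_mul hd hN b v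
      rw [hvdual] at h1
      have := h1.trans h2
      exact le_of_mul_le_mul_right this hD
    have hle : N x ≤ N x' := hOM x x' habs hsgn
    rcases lt_or_eq_of_le hle with h | heq
    · exact h
    exfalso
    set m : Fin d → ℝ := x + x' with hm
    have hmj : m j ≠ 0 := add_ne_zero_of_sign (hsgn j) hj
    have hmne : m ≠ 0 := by
      intro hc
      apply hmj
      rw [hc]
      rfl
    obtain ⟨v, hvne, hvsupp, hvsign, hvdual⟩ := H m hmne
    have hD : 0 < dualNorm N v := dualNorm_pos hd hN hvne
    have habs_m : ∀ i, |m i| = |x i| + |x' i| := fun i => abs_add_of_sign (hsgn i)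
    have hub : N m ≤ 2 * N x' := by
      have h1 : N m ≤ N ((2:ℝ) • x') := by
        apply hOM
        · intro i
          rw [habs_m i]
          have : |((2:ℝ) • x') i| = 2 * |x' i| := by
            simp [abs_mul]
          rw [this]
          linarith [habs i]
        · intro i
          have h2x : ((2:ℝ) • x') i = 2 * x' i := rfl
          have hmi : m i = x i + x' i := rfl
          rw [h2x, hmi]
          nlinarith [hsgn i, mul_self_nonneg (x' i)]
      have h2 : N ((2:ℝ) • x') = 2 * N x' := by
        rw [hN.2.2.1]; norm_num
      linarith
    have hlb : 2 * N x ≤ N m := by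
      have h1 : N ((2:ℝ) • x) ≤ N m := by
        apply hOM
        · intro i
          have : |((2:ℝ) • x) i| = 2 * |x i| := by
            simp [abs_mul]
          rw [this, habs_m i]
          linarith [habs i]
        · intro i
          have : ((2:ℝ) • x) i = 2 * x i := rfl
          rw [this]
          have : m i = x i + x' i := rfl
          rw [this]
          nlinarith [hsgn i, mul_self_nonneg (x i)]
      have h2 : N ((2:ℝ) • x) = 2 * N x := by
        rw [hN.2.2.1]; norm_num
      linarith
    have hNm : N m = 2 * N x' := le_antisymm hub (by rw [← heq]; exact hlb)
    have hsuppv : ∀ i, m i = 0 → v i = 0 := by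
      intro i hmi
      by_contra hvi
      exact ((Set.ext_iff.mp hvsupp i).mp hvi) hmi
    have hvj : v j ≠ 0 := by
      intro hc
      exact hmj (by by_contra hmc; exact ((Set.ext_iff.mp hvsupp j).mpr hmc) hc |>.elim)
    have hstrict2 : dot x v < dot x' v := by
      apply Finset.sum_lt_sum
      · intro i _
        exact term_le2 (hsgn i) (habs i) (hvsign i) (hsuppv i)
      · exact ⟨j, Finset.mem_univ j, term_lt (hsgn j) hj (hvsign j) hvj⟩
    have hsum : dot m v = dot x v + dot x' v := dot_add_left x x' v
    have hxv : dot x v ≤ N x' * dualNorm N v := by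
      have := dot_le_mul hd hN x v
      rw [heq] at this
      exact this
    have hx'v : dot x' v ≤ N x' * dualNorm N v := dot_le_mul hd hN x' v
    rw [hvdual, hNm] at hsum
    nlinarith

end OSMPaper
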